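/- Let X, Y ∈ ℝ^{N×N} be symmetric matrices and let A, B ∈ ℝ^{N×N} be arbitrary. Then the sum over all pairs (i,j) with 1 ≤ i ≤ N and 1 ≤ j ≤ N of tr[(E_{ji}X + XE_{ij})A] · tr[(E_{ji}Y + YE_{ij})B] equals 4·⟨X𝒮(A), Y𝒮(B)⟩_F. -/

import Mathlib

open Matrix BigOperators

/-- The `N × N` matrix with a `1` in entry `(i,j)` and `0` elsewhere. -/
def Eb (N : ℕ) (i j : Fin N) : Matrix (Fin N) (Fin N) ℝ :=
  Matrix.single i j 1

/-- The Frobenius inner product `⟨A,B⟩_F = tr(Aᵀ B)`. -/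
noncomputable def frob {N r : ℕ} (A B : Matrix (Fin N) (Fin r) ℝ) : ℝ := (Aᵀ * B).trace

/-- The symmetrization `𝒮(A) = (A + Aᵀ)/2`. -/
noncomputable def symPart {N : ℕ} (A : Matrix (Fin N) (Fin N) ℝ) : Matrix (Fin N) (Fin N) ℝ :=
  (1 / 2 : ℝ) • (A + Aᵀ)

lemma traceEb {N : ℕ} (i j : Fin N) (M : Matrix (Fin N) (Fin N) ℝ) :
    (Eb N j i * M).trace = M i j := by
  rw [Matrix.trace]
  rw [Finset.sum_eq_single j]
  · simp [Eb, Matrix.diag, Matrix.single_mul_apply_same]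
  · intro b _ hb
    simp [Eb, Matrix.diag, Matrix.mul_apply, Matrix.single, Ne.symm hb]
  · simp

lemma key {N : ℕ} (X A : Matrix (Fin N) (Fin N) ℝ) (hX : Xᵀ = X) (i j : Fin N) :
    ((Eb N j i * X + X * Eb N i j) * A).trace = 2 * (X * symPart A) i j := by
  have h2 : (X * Eb N i j * A).trace = (X * Aᵀ) i j := by
    rw [mul_assoc, Matrix.trace_mul_comm, mul_assoc, traceEb]
    nth_rewrite 1 [← hX]
    simp only [Matrix.mul_apply, Matrix.transpose_apply]
    exact Finset.sum_congr rfl fun k _ => mul_comm _ _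
  rw [add_mul, trace_add, mul_assoc, traceEb, h2]
  simp [symPart, Matrix.mul_add, Matrix.mul_smul, Matrix.add_apply, Matrix.smul_apply]
  ring

theorem stmt_14 (N : ℕ) (X Y A B : Matrix (Fin N) (Fin N) ℝ)
    (hX : Xᵀ = X) (hY : Yᵀ = Y) :
    ∑ i : Fin N, ∑ j : Fin N,
      ((Eb N j i * X + X * Eb N i j) * A).trace *
      ((Eb N j i * Y + Y * Eb N i j) * B).trace
      = 4 * frob (X * symPart A) (Y * symPart B) := by
  simp only [key X A hX, key Y B hY]
  simp only [frob, trace, Matrix.diag, Matrix.mul_apply, Matrix.transpose_apply]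
  rw [Finset.sum_comm, Finset.mul_sum]
  refine Finset.sum_congr rfl fun j _ => ?_
  rw [Finset.mul_sum]
  refine Finset.sum_congr rfl fun i _ => ?_
  ring
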